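/- arXiv:2403.17766 — 5 statements merged into one kernel-verified Lean document; each statement's English description precedes it below -/
import Mathlib

section
/- Let n ∈ ℕ, p ∈ (0,1), and let H be a finite graph with |V(H)| ≤ n. Let P be the planted-H distribution on {0,1}^{E(K_n)}. Then for every edge set S ⊆ E(K_n), E_P[χ_S] = ( M_{S,H} / n_(|V(S)|) ) · ((1−p)/p)^{|S|/2}, where V(S) denotes the set of vertices of [n] incident to at least one edge of S, S is regarded as the graph with vertex set V(S) and edge set S, and n_(k) = n(n−1)⋯(n−k+1) is the falling factorial. -/
open Filter

namespace Planted

abbrev Edge (n : ℕ) := {e : Sym2 (Fin n) // ¬ e.IsDiag}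

abbrev EdgeFun (n : ℕ) := Edge n → Bool

noncomputable def nullWeight (n : ℕ) (p : ℝ) (X : EdgeFun n) : ℝ :=
  ∏ e : Edge n, if X e then p else 1 - p

noncomputable def expQ (n : ℕ) (p : ℝ) (f : EdgeFun n → ℝ) : ℝ :=
  ∑ X : EdgeFun n, nullWeight n p X * f X

noncomputable def varQ (n : ℕ) (p : ℝ) (f : EdgeFun n → ℝ) : ℝ :=
  expQ n p fun X => (f X - expQ n p f) ^ 2

open Classical in
noncomputable def plant {V : Type} (n : ℕ) (H : SimpleGraph V) (φ : V ↪ Fin n)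
    (X : EdgeFun n) : EdgeFun n :=
  fun e => if ∃ u v, H.Adj u v ∧ (e : Sym2 (Fin n)) = s(φ u, φ v) then true else X e

open Classical in
noncomputable def expP {V : Type} [Fintype V] (n : ℕ) (p : ℝ) (H : SimpleGraph V)
    (f : EdgeFun n → ℝ) : ℝ :=
  (Fintype.card (V ↪ Fin n) : ℝ)⁻¹ *
    ∑ φ : V ↪ Fin n, ∑ X : EdgeFun n, nullWeight n p X * f (plant n H φ X)

noncomputable def varP {V : Type} [Fintype V] (n : ℕ) (p : ℝ) (H : SimpleGraph V)
    (f : EdgeFun n → ℝ) : ℝ :=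
  expP n p H fun X => (f X - expP n p H f) ^ 2

noncomputable def chi (n : ℕ) (p : ℝ) (S : Finset (Edge n)) (X : EdgeFun n) : ℝ :=
  ∏ e ∈ S, ((if X e then (1 : ℝ) else 0) - p) / Real.sqrt (p * (1 - p))

def IsDegreeLE (n : ℕ) (p : ℝ) (D : ℕ) (f : EdgeFun n → ℝ) : Prop :=
  f ∈ Submodule.span ℝ {g : EdgeFun n → ℝ | ∃ S : Finset (Edge n), S.card ≤ D ∧ g = chi n p S}

noncomputable def advOf {V : Type} [Fintype V] (n : ℕ) (p : ℝ) (H : SimpleGraph V)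
    (f : EdgeFun n → ℝ) : ℝ :=
  expP n p H f / Real.sqrt (expQ n p fun X => f X ^ 2)

noncomputable def Adv {V : Type} [Fintype V] (n : ℕ) (p : ℝ) (D : ℕ)
    (H : SimpleGraph V) : ℝ :=
  sSup {r : ℝ | ∃ f, IsDegreeLE n p D f ∧ f ≠ 0 ∧ r = advOf n p H f}

def IsStar (n t : ℕ) (S : Finset (Edge n)) : Prop :=
  S.card = t ∧ ∃ v : Fin n, ∀ e ∈ S, v ∈ (e : Sym2 (Fin n))

open Classical in
noncomputable def starCount (n : ℕ) (p : ℝ) (t : ℕ) : EdgeFun n → ℝ :=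
  fun X => ∑ S : Finset (Edge n), if IsStar n t S then chi n p S X else 0

def StronglySeparates {Vf : ℕ → Type} [∀ n, Fintype (Vf n)] (p : ℕ → ℝ)
    (H : ∀ n, SimpleGraph (Vf n)) (f : ∀ n, EdgeFun n → ℝ) : Prop :=
  (fun n => max (Real.sqrt (varP n (p n) (H n) (f n))) (Real.sqrt (varQ n (p n) (f n))))
    =o[atTop] fun n => expP n (p n) (H n) (f n) - expQ n (p n) (f n)

noncomputable def copyCount {α β : Type} (S : SimpleGraph α) (G : SimpleGraph β) : ℕ :=
  Nat.card {f : α ↪ β // ∀ u v, S.Adj u v → G.Adj (f u) (f v)}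

def starGraph (t : ℕ) : SimpleGraph (Fin (t + 1)) :=
  SimpleGraph.fromRel fun u _ => u = 0

open Classical in
noncomputable def edgeVerts (n : ℕ) (S : Finset (Edge n)) : Finset (Fin n) :=
  Finset.univ.filter fun v => ∃ e ∈ S, v ∈ (e : Sym2 (Fin n))

def finsetGraph (n : ℕ) (S : Finset (Edge n)) :
    SimpleGraph {v : Fin n // v ∈ edgeVerts n S} where
  Adj u v := ∃ e ∈ S, (e : Sym2 (Fin n)) = s(u.1, v.1)
  symm := by
    constructor
    rintro u v ⟨e, he, heq⟩
    exact ⟨e, he, heq.trans Sym2.eq_swap⟩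
  loopless := by
    constructor
    rintro u ⟨e, he, heq⟩
    exact e.2 (by rw [heq]; exact Sym2.mk_isDiag_iff.mpr rfl)

noncomputable def finCopyCount (n : ℕ) (S : Finset (Edge n)) {V : Type}
    (H : SimpleGraph V) : ℕ :=
  copyCount (finsetGraph n S) H

end Planted

namespace PlantedAux

open Planted

/-- Sum-product swap for independent Bernoulli coordinates. -/
lemma sum_prod_bool (n : ℕ) (w : Edge n → Bool → ℝ) :
    ∑ X : EdgeFun n, ∏ e, w e (X e) = ∏ e, (w e true + w e false) := by
  classical
  have h : ∀ e : Edge n, w e true + w e false = ∑ b ∈ (Finset.univ : Finset Bool), w e b := by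
    intro e; rw [Fintype.sum_bool]
  simp_rw [h]
  rw [Finset.prod_univ_sum, Fintype.piFinset_univ]

section Main

variable {V : Type} [Fintype V]

def Good (n : ℕ) (H : SimpleGraph V) (S : Finset (Edge n)) (φ : V ↪ Fin n) : Prop :=
  ∀ e ∈ S, ∃ u v, H.Adj u v ∧ (e : Sym2 (Fin n)) = s(φ u, φ v)

open Classical in
lemma inner_sum (n : ℕ) {p : ℝ} (hp : p ∈ Set.Ioo (0 : ℝ) 1) (H : SimpleGraph V)
    (S : Finset (Edge n)) (φ : V ↪ Fin n) :
    ∑ X : EdgeFun n, nullWeight n p X * chi n p S (plant n H φ X) =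
      if Good n H S φ then ((1 - p) / Real.sqrt (p * (1 - p))) ^ S.card else 0 := by
  classical
  set c : ℝ := (1 - p) / Real.sqrt (p * (1 - p)) with hc
  set g : Bool → ℝ := fun b => ((if b then (1 : ℝ) else 0) - p) / Real.sqrt (p * (1 - p))
    with hg
  set pl : Edge n → Prop := fun e => ∃ u v, H.Adj u v ∧ (e : Sym2 (Fin n)) = s(φ u, φ v)
    with hpl
  have hplant : ∀ (X : EdgeFun n) (e : Edge n),
      g (plant n H φ X e) = if pl e then c else g (X e) := by
    intro X e
    by_cases h : pl e
    · rw [if_pos h]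
      simp only [hpl] at h
      simp [plant, h, hg, hc]
    · rw [if_neg h]
      simp only [hpl] at h
      simp [plant, h]
  have hchi : ∀ X : EdgeFun n, nullWeight n p X * chi n p S (plant n H φ X)
      = ∏ e : Edge n, ((if X e then p else 1 - p) *
          (if e ∈ S then (if pl e then c else g (X e)) else 1)) := by
    intro X
    rw [Finset.prod_mul_distrib]
    congr 1
    have h1 : chi n p S (plant n H φ X) = ∏ e ∈ S, (if pl e then c else g (X e)) := by
      rw [chi]
      exact Finset.prod_congr rfl fun e _ => hplant X e
    rw [h1, Finset.prod_ite_mem, Finset.univ_inter]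
  simp_rw [hchi]
  rw [sum_prod_bool n (fun e b => (if b then p else 1 - p) * if e ∈ S then if pl e then c else g b else 1)]
  beta_reduce
  have hs : (0 : ℝ) < Real.sqrt (p * (1 - p)) := by
    apply Real.sqrt_pos.2
    exact mul_pos hp.1 (by linarith [hp.2])
  have key : ∀ e : Edge n,
      ((if (true : Bool) then p else 1 - p) *
          (if e ∈ S then (if pl e then c else g true) else 1)) +
        ((if (false : Bool) then p else 1 - p) *
          (if e ∈ S then (if pl e then c else g false) else 1))
      = if e ∈ S then (if pl e then c else 0) else 1 := by
    intro e
    by_cases h1 : e ∈ S <;> by_cases h2 : pl e <;>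
      simp [h1, h2, hg] <;> ring
  rw [Finset.prod_congr rfl fun e _ => key e]
  rw [Finset.prod_ite_mem, Finset.univ_inter]
  by_cases hG : Good n H S φ
  · rw [if_pos hG]
    rw [Finset.prod_congr rfl fun e he => if_pos (hG e he), Finset.prod_const]
  · rw [if_neg hG]
    obtain ⟨e, heS, hne⟩ : ∃ e ∈ S, ¬ pl e := by
      by_contra h
      push_neg at h
      exact hG h
    exact Finset.prod_eq_zero heS (if_neg hne)

lemma const_pow {p : ℝ} (hp : p ∈ Set.Ioo (0 : ℝ) 1) (k : ℕ) :
    ((1 - p) / Real.sqrt (p * (1 - p))) ^ k = ((1 - p) / p) ^ ((k : ℝ) / 2) := by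
  have hp0 : (0 : ℝ) < p := hp.1
  have hp1 : (0 : ℝ) < 1 - p := by linarith [hp.2]
  have hr : (0 : ℝ) ≤ (1 - p) / p := le_of_lt (div_pos hp1 hp0)
  have h1 : (1 - p) / Real.sqrt (p * (1 - p)) = Real.sqrt ((1 - p) / p) := by
    rw [show (1 - p) / p = (1 - p) ^ 2 / (p * (1 - p)) by field_simp,
      Real.sqrt_div (sq_nonneg _), Real.sqrt_sq hp1.le]
  rw [h1, Real.sqrt_eq_rpow, ← Real.rpow_natCast (((1 - p) / p) ^ ((1 : ℝ) / 2)) k,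
    ← Real.rpow_mul hr]
  congr 1
  ring

section Counting

variable (n : ℕ) (H : SimpleGraph V) (S : Finset (Edge n))

abbrev Copies := {f : {v : Fin n // v ∈ edgeVerts n S} ↪ V //
  ∀ u v, (finsetGraph n S).Adj u v → H.Adj (f u) (f v)}

variable {n H S}

def Comp (ψ : Copies n H S) (φ : V ↪ Fin n) : Prop :=
  ∀ a : {v : Fin n // v ∈ edgeVerts n S}, φ (ψ.1 a) = a.1

lemma mem_edgeVerts_iff {v : Fin n} :
    v ∈ edgeVerts n S ↔ ∃ e ∈ S, v ∈ (e : Sym2 (Fin n)) := by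
  classical
  simp [edgeVerts]

lemma good_exists {φ : V ↪ Fin n} (hG : Good n H S φ) :
    ∃ ψ : Copies n H S, Comp ψ φ := by
  classical
  have hrange : ∀ w : {v : Fin n // v ∈ edgeVerts n S}, w.1 ∈ Set.range φ := by
    intro w
    obtain ⟨e, heS, hwe⟩ := mem_edgeVerts_iff.1 w.2
    obtain ⟨u, v, _, hev⟩ := hG e heS
    rw [hev, Sym2.mem_iff] at hwe
    rcases hwe with h | h
    · exact ⟨u, h.symm⟩
    · exact ⟨v, h.symm⟩
  set ψ0 : {v : Fin n // v ∈ edgeVerts n S} → V := fun w => Classical.choose (hrange w)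
    with hψ0
  have hspec : ∀ w, φ (ψ0 w) = w.1 := fun w => Classical.choose_spec (hrange w)
  have hinj : Function.Injective ψ0 := by
    intro w1 w2 h
    apply Subtype.ext
    rw [← hspec w1, ← hspec w2, h]
  refine ⟨⟨⟨ψ0, hinj⟩, ?_⟩, fun a => hspec a⟩
  rintro w1 w2 ⟨e, heS, he⟩
  obtain ⟨u, v, hadj, hev⟩ := hG e heS
  rw [hev] at he
  rcases Sym2.eq_iff.1 he with ⟨h1, h2⟩ | ⟨h1, h2⟩
  · have hu : ψ0 w1 = u := φ.injective (by rw [hspec w1, ← h1])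
    have hv : ψ0 w2 = v := φ.injective (by rw [hspec w2, ← h2])
    simpa [hu, hv] using hadj
  · have hu : ψ0 w2 = u := φ.injective (by rw [hspec w2, ← h1])
    have hv : ψ0 w1 = v := φ.injective (by rw [hspec w1, ← h2])
    simpa [hu, hv] using hadj.symm

lemma comp_unique {φ : V ↪ Fin n} {ψ1 ψ2 : Copies n H S}
    (h1 : Comp ψ1 φ) (h2 : Comp ψ2 φ) : ψ1 = ψ2 := by
  apply Subtype.ext
  apply Function.Embedding.ext
  intro a
  exact φ.injective (by rw [h1 a, h2 a])

lemma comp_good {φ : V ↪ Fin n} {ψ : Copies n H S} (h : Comp ψ φ) : Good n H S φ := by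
  intro e heS
  have hrep : ∀ z : Sym2 (Fin n), ∃ x y, z = s(x, y) :=
    fun z => Sym2.ind (fun x y => ⟨x, y, rfl⟩) z
  obtain ⟨x, y, hxy⟩ := hrep (e : Sym2 (Fin n))
  have hx : x ∈ edgeVerts n S := mem_edgeVerts_iff.2 ⟨e, heS, by rw [hxy]; exact Sym2.mem_mk_left _ _⟩
  have hy : y ∈ edgeVerts n S := mem_edgeVerts_iff.2 ⟨e, heS, by rw [hxy]; exact Sym2.mem_mk_right _ _⟩
  have hadj : (finsetGraph n S).Adj ⟨x, hx⟩ ⟨y, hy⟩ := ⟨e, heS, hxy⟩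
  refine ⟨ψ.1 ⟨x, hx⟩, ψ.1 ⟨y, hy⟩, ψ.2 _ _ hadj, ?_⟩
  rw [hxy, h ⟨x, hx⟩, h ⟨y, hy⟩]

set_option maxHeartbeats 800000 in
open Classical in
noncomputable def compEquiv (ψ : Copies n H S) :
    {φ : V ↪ Fin n // Comp ψ φ} ≃
      ({v : V // v ∉ Set.range ψ.1} ↪ {w : Fin n // w ∉ edgeVerts n S}) where
  toFun := fun x =>
    ⟨fun v => ⟨x.1 v.1, by
        intro hmem
        have := x.2 ⟨x.1 v.1, hmem⟩
        exact v.2 ⟨⟨x.1 v.1, hmem⟩, x.1.injective this⟩⟩,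
      by
        intro v1 v2 h
        have := congrArg Subtype.val h
        exact Subtype.ext (x.1.injective this)⟩
  invFun := fun θ =>
    ⟨⟨fun v => if h : v ∈ Set.range ψ.1 then (Classical.choose h).1
        else (θ ⟨v, h⟩).1, by
        intro v1 v2 h
        dsimp only at h
        by_cases h1 : v1 ∈ Set.range ψ.1 <;> by_cases h2 : v2 ∈ Set.range ψ.1
        · rw [dif_pos h1, dif_pos h2] at h
          rw [← Classical.choose_spec h1, ← Classical.choose_spec h2,
            Subtype.ext h]
        · rw [dif_pos h1, dif_neg h2] at h
          exact absurd (h ▸ (Classical.choose h1).2) (θ ⟨v2, h2⟩).2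
        · rw [dif_neg h1, dif_pos h2] at h
          exact absurd (h ▸ (θ ⟨v1, h1⟩).2) (not_not.2 (Classical.choose h2).2)
        · rw [dif_neg h1, dif_neg h2] at h
          have := θ.injective (Subtype.ext h)
          exact congrArg Subtype.val this⟩,
      by
        intro a
        have h : ψ.1 a ∈ Set.range ψ.1 := ⟨a, rfl⟩
        show (if h' : ψ.1 a ∈ Set.range ψ.1 then (Classical.choose h').1 else _) = a.1
        rw [dif_pos h]
        have : Classical.choose h = a := ψ.1.injective (Classical.choose_spec h)
        rw [this]⟩
  left_inv := by
    intro x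
    apply Subtype.ext
    apply Function.Embedding.ext
    intro v
    simp only [Function.Embedding.coeFn_mk]
    by_cases h : v ∈ Set.range ψ.1
    · rw [dif_pos h]
      rw [← x.2 (Classical.choose h)]
      exact congrArg x.1 (Classical.choose_spec h)
    · rw [dif_neg h]
      rfl
  right_inv := by
    intro θ
    apply Function.Embedding.ext
    intro v
    apply Subtype.ext
    simp only [Function.Embedding.coeFn_mk]
    show (if h : v.1 ∈ Set.range ψ.1 then (Classical.choose h).1 else (θ ⟨v.1, h⟩).1) = (θ v).1
    rw [dif_neg v.2]

open Classical in
lemma card_comp (hcard : Fintype.card V ≤ n) (ψ : Copies n H S) :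
    Nat.card {φ : V ↪ Fin n // Comp ψ φ} =
      (n - (edgeVerts n S).card).descFactorial
        (Fintype.card V - (edgeVerts n S).card) := by
  classical
  rw [Nat.card_eq_fintype_card, Fintype.card_congr (compEquiv ψ),
    Fintype.card_embedding_eq]
  congr 1
  · rw [Fintype.card_subtype_compl]
    congr 1
    · exact Fintype.card_fin n
    · exact Fintype.card_coe _
  · rw [Fintype.card_subtype_compl]
    congr 1
    have h1 : Fintype.card {v : V // v ∈ Set.range ψ.1} =
        Fintype.card {v : Fin n // v ∈ edgeVerts n S} := by
      rw [Set.card_range_of_injective ψ.1.injective]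
    rw [h1, Fintype.card_coe]

open Classical in
lemma card_good (hcard : Fintype.card V ≤ n) :
    Nat.card {φ : V ↪ Fin n // Good n H S φ} =
      finCopyCount n S H *
        (n - (edgeVerts n S).card).descFactorial
          (Fintype.card V - (edgeVerts n S).card) := by
  classical
  by_cases hne : Nonempty (Copies n H S)
  · set F : {φ : V ↪ Fin n // Good n H S φ} → Copies n H S :=
      fun x => Classical.choose (good_exists x.2) with hF
    have hFspec : ∀ x, Comp (F x) x.1 := fun x => Classical.choose_spec (good_exists x.2)
    have hfc : finCopyCount n S H = Fintype.card (Copies n H S) := by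
      rw [show finCopyCount n S H = Nat.card (Copies n H S) from rfl,
        Nat.card_eq_fintype_card]
    rw [Nat.card_eq_fintype_card, ← Finset.card_univ,
      Finset.card_eq_sum_card_fiberwise (t := Finset.univ) (f := F) (fun x _ => Finset.mem_univ _)]
    have hfib : ∀ ψ : Copies n H S,
        (Finset.univ.filter fun x => F x = ψ).card =
          (n - (edgeVerts n S).card).descFactorial
            (Fintype.card V - (edgeVerts n S).card) := by
      intro ψ
      have hequiv : {x : {φ : V ↪ Fin n // Good n H S φ} // F x = ψ} ≃
          {φ : V ↪ Fin n // Comp ψ φ} := by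
        refine ⟨fun x => ⟨x.1.1, by have h := hFspec x.1; rwa [x.2] at h⟩,
          fun y => ⟨⟨y.1, comp_good y.2⟩, ?_⟩, fun x => rfl, fun y => rfl⟩
        exact comp_unique (hFspec ⟨y.1, comp_good y.2⟩) y.2
      rw [← Fintype.card_subtype, Fintype.card_congr hequiv,
        ← Nat.card_eq_fintype_card, card_comp hcard ψ]
    rw [Finset.sum_congr rfl fun ψ _ => hfib ψ, Finset.sum_const, Finset.card_univ,
      smul_eq_mul, hfc]
  · have h1 : finCopyCount n S H = 0 := by
      rw [finCopyCount, copyCount, Nat.card_eq_zero]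
      exact Or.inl (not_nonempty_iff.mp hne)
    have h2 : IsEmpty {φ : V ↪ Fin n // Good n H S φ} := by
      refine ⟨fun x => hne ?_⟩
      obtain ⟨ψ, _⟩ := good_exists x.2
      exact ⟨ψ⟩
    rw [h1, Nat.zero_mul, Nat.card_eq_zero]
    exact Or.inl h2

end Counting

end Main

end PlantedAux

open Planted in
/-- the planted expectation of a Walsh–Fourier character. -/
theorem expP_chi
    {V : Type} [Fintype V] (n : ℕ) (p : ℝ) (hp : p ∈ Set.Ioo (0 : ℝ) 1)
    (H : SimpleGraph V) (hcard : Fintype.card V ≤ n)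
    (S : Finset (Edge n)) :
    expP n p H (chi n p S) =
      (finCopyCount n S H : ℝ) / (n.descFactorial (edgeVerts n S).card : ℝ) *
        ((1 - p) / p) ^ ((S.card : ℝ) / 2) := by
  classical
  rw [expP]
  rw [Finset.sum_congr rfl fun φ _ => PlantedAux.inner_sum n hp H S φ]
  rw [Finset.sum_ite, Finset.sum_const, Finset.sum_const_zero, add_zero, nsmul_eq_mul]
  have hfilter : (Finset.univ.filter fun φ : V ↪ Fin n => PlantedAux.Good n H S φ).card =
      finCopyCount n S H * (n - (edgeVerts n S).card).descFactorial
        (Fintype.card V - (edgeVerts n S).card) := by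
    rw [← Fintype.card_subtype, ← Nat.card_eq_fintype_card, PlantedAux.card_good hcard]
  have hemb : Fintype.card (V ↪ Fin n) = n.descFactorial (Fintype.card V) := by
    rw [Fintype.card_embedding_eq, Fintype.card_fin]
  rw [hfilter, hemb, PlantedAux.const_pow hp S.card]
  set k := (edgeVerts n S).card with hkdef
  set m := Fintype.card V with hmdef
  have hkn : k ≤ n := by
    have := Finset.card_le_univ (edgeVerts n S)
    simpa using this
  by_cases hkm : k ≤ m
  · have hdesc : (n - k).descFactorial (m - k) * n.descFactorial k = n.descFactorial m :=
      Nat.descFactorial_mul_descFactorial hkm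
    have hD : (((n - k).descFactorial (m - k) : ℕ) : ℝ) ≠ 0 := by
      rw [Ne, Nat.cast_eq_zero, Nat.descFactorial_eq_zero_iff_lt]
      omega
    have hk0 : ((n.descFactorial k : ℕ) : ℝ) ≠ 0 := by
      rw [Ne, Nat.cast_eq_zero, Nat.descFactorial_eq_zero_iff_lt]
      omega
    rw [← hdesc]
    push_cast
    field_simp
  · have hcc : finCopyCount n S H = 0 := by
      rw [show finCopyCount n S H = Nat.card (PlantedAux.Copies n H S) from rfl,
        Nat.card_eq_zero]
      left
      refine ⟨fun ψ => hkm ?_⟩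
      have := Fintype.card_le_of_embedding ψ.1
      simpa [Fintype.card_coe] using this
    rw [hcc]
    simp
end

section
/- Let n ∈ ℕ, p ∈ (0,1), D ∈ ℕ, and let H be a finite graph with |V(H)| ≤ n. Let Q = G(n,p) and let P be the planted-H distribution on {0,1}^{E(K_n)}. Then the square of the degree-D advantage satisfies (Adv^{≤D})² = Σ_{S ⊆ E(K_n), |S| ≤ D} ( M_{S,H} / n_(|V(S)|) )² · ((1−p)/p)^{|S|}, where the sum ranges over all edge subsets S of E(K_n) of size at most D (including S = ∅, which contributes 1), V(S) denotes the set of vertices incident to an edge of S, S is regarded as the graph with vertex set V(S) and edge set S, and n_(k) is the falling factorial. -/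
open Filter

namespace AdvProof
open Planted Finset

lemma sum_nullWeight_prod (n : ℕ) (p : ℝ) (A : Finset (Edge n)) (g : Edge n → Bool → ℝ) :
    ∑ X : EdgeFun n, nullWeight n p X * ∏ e ∈ A, g e (X e)
      = ∏ e ∈ A, (p * g e true + (1 - p) * g e false) := by
  classical
  have h1 : ∀ X : EdgeFun n, nullWeight n p X * ∏ e ∈ A, g e (X e)
      = ∏ e : Edge n, ((if X e then p else 1 - p) * (if e ∈ A then g e (X e) else 1)) := by
    intro X
    rw [Finset.prod_mul_distrib, nullWeight]
    congr 1
    rw [Finset.prod_ite_mem, Finset.univ_inter]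
  simp only [h1]
  have h2 : ∑ X : EdgeFun n, ∏ e : Edge n,
      ((if X e then p else 1 - p) * (if e ∈ A then g e (X e) else 1))
      = ∏ e : Edge n, ∑ b : Bool, ((if b then p else 1 - p) * (if e ∈ A then g e b else 1)) := by
    rw [Finset.prod_univ_sum]
    rw [Fintype.piFinset_univ]
  rw [h2]
  have h3 : ∀ e : Edge n, ∑ b : Bool, ((if b then p else 1 - p) * (if e ∈ A then g e b else 1))
      = if e ∈ A then p * g e true + (1 - p) * g e false else 1 := by
    intro e
    rw [Fintype.sum_bool]
    by_cases h : e ∈ A <;> simp [h]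
  simp only [h3]
  rw [Finset.prod_ite_mem, Finset.univ_inter]

lemma sum_nullWeight (n : ℕ) (p : ℝ) : ∑ X : EdgeFun n, nullWeight n p X = 1 := by
  have := sum_nullWeight_prod n p ∅ (fun _ _ => 1)
  simpa using this

noncomputable def d (n : ℕ) (p : ℝ) (X : EdgeFun n) (e : Edge n) : ℝ :=
  ((if X e then (1 : ℝ) else 0) - p) / Real.sqrt (p * (1 - p))

lemma chi_eq_prod_union (n : ℕ) (p : ℝ) (S T : Finset (Edge n)) (X : EdgeFun n) :
    chi n p S X = ∏ e ∈ S ∪ T, (if e ∈ S then d n p X e else 1) := by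
  classical
  rw [Finset.prod_ite_mem, Finset.union_inter_cancel_left]
  rfl

lemma expQ_chi_mul_chi {n : ℕ} {p : ℝ} (hp : p ∈ Set.Ioo (0:ℝ) 1) (S T : Finset (Edge n)) :
    expQ n p (fun X => chi n p S X * chi n p T X) = if S = T then 1 else 0 := by
  classical
  have hp0 := hp.1
  have hp1 := hp.2
  have hpp : (0:ℝ) < p * (1 - p) := by nlinarith
  set s : ℝ := Real.sqrt (p * (1 - p)) with hs
  have hs2 : s * s = p * (1 - p) := Real.mul_self_sqrt hpp.le
  have hs0 : s ≠ 0 := by positivity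
  have key : ∀ X : EdgeFun n, chi n p S X * chi n p T X
      = ∏ e ∈ S ∪ T, ((if e ∈ S then d n p X e else 1) * (if e ∈ T then d n p X e else 1)) := by
    intro X
    rw [Finset.prod_mul_distrib, ← chi_eq_prod_union n p S T X, Finset.union_comm,
      ← chi_eq_prod_union n p T S X]
  unfold expQ
  simp only [key]
  have := sum_nullWeight_prod n p (S ∪ T)
    (fun e b => (if e ∈ S then ((if b then (1:ℝ) else 0) - p) / s else 1)
      * (if e ∈ T then ((if b then (1:ℝ) else 0) - p) / s else 1))
  have hd : ∀ (X : EdgeFun n) e, d n p X e = ((if X e then (1:ℝ) else 0) - p) / s := fun X e => rfl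
  simp only [hd] at *
  rw [this]
  simp only [if_true, Bool.false_eq_true, if_false]
  have factor : ∀ e : Edge n,
      p * ((if e ∈ S then ((1:ℝ) - p) / s else 1) * (if e ∈ T then ((1:ℝ) - p) / s else 1))
        + (1 - p) * ((if e ∈ S then ((0:ℝ) - p) / s else 1) * (if e ∈ T then ((0:ℝ) - p) / s else 1))
      = if e ∈ S ∧ e ∈ T then 1 else (if e ∈ S ∨ e ∈ T then 0 else 1) := by
    intro e
    by_cases h1 : e ∈ S <;> by_cases h2 : e ∈ T <;> simp [h1, h2] <;> field_simp <;> nlinarith [hs2]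
  by_cases hST : S = T
  · subst hST
    rw [if_pos rfl, Finset.union_self]
    apply Finset.prod_eq_one
    intro e he
    rw [factor e, if_pos ⟨he, he⟩]
  · rw [if_neg hST]
    have hsub : ¬ S ⊆ T ∨ ¬ T ⊆ S := by
      by_contra hc
      push_neg at hc
      exact hST (Finset.Subset.antisymm hc.1 hc.2)
    have hex : ∃ e, (e ∈ S ∧ e ∉ T) ∨ (e ∈ T ∧ e ∉ S) := by
      rcases hsub with h | h
      · obtain ⟨e, h1, h2⟩ := Finset.not_subset.mp h
        exact ⟨e, Or.inl ⟨h1, h2⟩⟩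
      · obtain ⟨e, h1, h2⟩ := Finset.not_subset.mp h
        exact ⟨e, Or.inr ⟨h1, h2⟩⟩
    obtain ⟨e, he⟩ := hex
    have hmem : e ∈ S ∪ T := by
      rcases he with ⟨h, _⟩ | ⟨h, _⟩
      · exact Finset.mem_union_left _ h
      · exact Finset.mem_union_right _ h
    apply Finset.prod_eq_zero hmem
    rw [factor e]
    rcases he with ⟨h1, h2⟩ | ⟨h1, h2⟩ <;>
      · rw [if_neg (by tauto), if_pos (by tauto)]

end AdvProof
namespace AdvProof
open Planted Finset

lemma expQ_lin (n : ℕ) (p : ℝ) {ι : Type} (t : Finset ι) (c : ι → ℝ)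
    (G : ι → EdgeFun n → ℝ) :
    expQ n p (fun X => ∑ g ∈ t, c g * G g X) = ∑ g ∈ t, c g * expQ n p (G g) := by
  unfold expQ
  simp only [Finset.mul_sum]
  rw [Finset.sum_comm]
  exact Finset.sum_congr rfl fun g _ => Finset.sum_congr rfl fun X _ => by ring

lemma expP_lin {V : Type} [Fintype V] (n : ℕ) (p : ℝ) (H : SimpleGraph V) {ι : Type}
    (t : Finset ι) (c : ι → ℝ) (G : ι → EdgeFun n → ℝ) :
    expP n p H (fun X => ∑ g ∈ t, c g * G g X) = ∑ g ∈ t, c g * expP n p H (G g) := by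
  unfold expP
  have h : ∀ φ : V ↪ Fin n,
      (∑ X : EdgeFun n, nullWeight n p X * (∑ g ∈ t, c g * G g (plant n H φ X)))
      = ∑ g ∈ t, c g * ∑ X : EdgeFun n, nullWeight n p X * G g (plant n H φ X) := by
    intro φ
    simp only [Finset.mul_sum]
    rw [Finset.sum_comm]
    exact Finset.sum_congr rfl fun g _ => Finset.sum_congr rfl fun X _ => by ring
  simp only [h]
  rw [Finset.sum_comm, Finset.mul_sum]
  refine Finset.sum_congr rfl fun g _ => ?_
  rw [← Finset.mul_sum]
  ring

lemma expQ_sq_of_ortho (n : ℕ) (p : ℝ) (t : Finset (EdgeFun n → ℝ))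
    (hortho : ∀ g ∈ t, ∀ h ∈ t, expQ n p (fun X => g X * h X) = if g = h then 1 else 0)
    (c : (EdgeFun n → ℝ) → ℝ) :
    expQ n p (fun X => (∑ g ∈ t, c g * g X) ^ 2) = ∑ g ∈ t, (c g) ^ 2 := by
  classical
  have h1 : ∀ X : EdgeFun n, (∑ g ∈ t, c g * g X) ^ 2
      = ∑ g ∈ t, c g * (∑ h ∈ t, c h * (g X * h X)) := by
    intro X
    rw [sq, Finset.sum_mul_sum]
    refine Finset.sum_congr rfl fun g _ => ?_
    rw [Finset.mul_sum]
    exact Finset.sum_congr rfl fun h _ => by ring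
  simp only [h1]
  rw [expQ_lin n p t c (fun g X => ∑ h ∈ t, c h * (g X * h X))]
  refine Finset.sum_congr rfl fun g hg => ?_
  rw [expQ_lin n p t c (fun h X => g X * h X)]
  have h2 : ∑ h ∈ t, c h * expQ n p (fun X => g X * h X) = c g := by
    rw [Finset.sum_congr rfl (fun h hh => by rw [hortho g hg h hh])]
    simp only [mul_ite, mul_one, mul_zero]
    rw [Finset.sum_ite_eq t g c, if_pos hg]
  rw [h2]
  ring

lemma chi_inj {n : ℕ} {p : ℝ} (hp : p ∈ Set.Ioo (0:ℝ) 1) (S T : Finset (Edge n))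
    (h : chi n p S = chi n p T) : S = T := by
  by_contra hne
  have h1 := expQ_chi_mul_chi hp S T
  rw [if_neg hne, ← h] at h1
  have h2 := expQ_chi_mul_chi hp S S
  rw [if_pos rfl] at h2
  rw [h1] at h2
  norm_num at h2

open Classical in
noncomputable def Fch (n : ℕ) (p : ℝ) (D : ℕ) : Finset (EdgeFun n → ℝ) :=
  (Finset.univ.filter fun S : Finset (Edge n) => S.card ≤ D).image (chi n p)

lemma degree_span (n : ℕ) (p : ℝ) (D : ℕ) :
    {g : EdgeFun n → ℝ | ∃ S : Finset (Edge n), S.card ≤ D ∧ g = chi n p S}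
      = ↑(Fch n p D) := by
  classical
  ext g
  simp only [Set.mem_setOf_eq, Fch, Finset.coe_image, Set.mem_image, Finset.mem_coe,
    Finset.mem_filter, Finset.mem_univ, true_and]
  constructor
  · rintro ⟨S, hS, rfl⟩; exact ⟨S, hS, rfl⟩
  · rintro ⟨S, hS, rfl⟩; exact ⟨S, hS, rfl⟩

lemma ortho_Fch {n : ℕ} {p : ℝ} (hp : p ∈ Set.Ioo (0:ℝ) 1) (D : ℕ) :
    ∀ g ∈ Fch n p D, ∀ h ∈ Fch n p D,
      expQ n p (fun X => g X * h X) = if g = h then 1 else 0 := by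
  classical
  intro g hg h hh
  obtain ⟨S, _, rfl⟩ := Finset.mem_image.mp hg
  obtain ⟨T, _, rfl⟩ := Finset.mem_image.mp hh
  rw [expQ_chi_mul_chi hp S T]
  by_cases hST : S = T
  · subst hST; rw [if_pos rfl, if_pos rfl]
  · rw [if_neg hST, if_neg (fun hc => hST (chi_inj hp S T hc))]

lemma card_emb_pos {V : Type} [Fintype V] (n : ℕ) (hcard : Fintype.card V ≤ n) :
    0 < Fintype.card (V ↪ Fin n) := by
  rw [Fintype.card_embedding_eq, Fintype.card_fin]
  refine Nat.pos_of_ne_zero fun h => ?_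
  have := Nat.descFactorial_eq_zero_iff_lt.mp h
  omega

lemma expP_one {V : Type} [Fintype V] (n : ℕ) (p : ℝ) (H : SimpleGraph V)
    (hcard : Fintype.card V ≤ n) :
    expP n p H (fun _ => (1:ℝ)) = 1 := by
  unfold expP
  simp only [mul_one, sum_nullWeight, Finset.sum_const, Finset.card_univ, nsmul_eq_mul]
  rw [inv_mul_cancel₀]
  exact_mod_cast (card_emb_pos n hcard).ne'

lemma chi_empty (n : ℕ) (p : ℝ) : chi n p ∅ = fun _ => (1:ℝ) := by
  funext X; simp [chi]

lemma adv_eq {V : Type} [Fintype V] (n : ℕ) (p : ℝ) (hp : p ∈ Set.Ioo (0:ℝ) 1) (D : ℕ)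
    (H : SimpleGraph V) (hcard : Fintype.card V ≤ n) :
    Adv n p D H = Real.sqrt (∑ g ∈ Fch n p D, (expP n p H g) ^ 2) := by
  classical
  set a : (EdgeFun n → ℝ) → ℝ := fun g => expP n p H g with ha
  set Sig : ℝ := ∑ g ∈ Fch n p D, (a g) ^ 2 with hSig
  have hSig0 : 0 ≤ Sig := Finset.sum_nonneg fun g _ => sq_nonneg _
  have hmem_empty : chi n p ∅ ∈ Fch n p D := Finset.mem_image.mpr
    ⟨∅, Finset.mem_filter.mpr ⟨Finset.mem_univ _, by simp⟩, rfl⟩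
  have haempty : a (chi n p ∅) = 1 := by
    rw [ha]; simp only; rw [chi_empty]; exact expP_one n p H hcard
  have hSig1 : 1 ≤ Sig := by
    calc (1:ℝ) = a (chi n p ∅) ^ 2 := by rw [haempty]; try norm_num
    _ ≤ Sig := Finset.single_le_sum (fun g _ => sq_nonneg (a g)) hmem_empty
  apply IsGreatest.csSup_eq
  constructor
  · -- membership: the optimal f
    refine ⟨fun X => ∑ g ∈ Fch n p D, a g * g X, ?_, ?_, ?_⟩
    · unfold IsDegreeLE
      rw [degree_span]
      have hsum : (fun X => ∑ g ∈ Fch n p D, a g * g X) = ∑ g ∈ Fch n p D, a g • g := by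
        funext X; rw [Finset.sum_apply]; rfl
      rw [hsum]
      exact Submodule.sum_mem _ fun g hg => Submodule.smul_mem _ _ (Submodule.subset_span hg)
    · intro h0
      have h1 : expQ n p (fun X => (∑ g ∈ Fch n p D, a g * g X) ^ 2) = Sig :=
        expQ_sq_of_ortho n p _ (ortho_Fch hp D) a
      have h2 : ∀ X : EdgeFun n, (∑ g ∈ Fch n p D, a g * g X) = 0 := fun X => congrFun h0 X
      rw [show (fun X : EdgeFun n => (∑ g ∈ Fch n p D, a g * g X) ^ 2) = fun _ => (0:ℝ) from
        funext fun X => by rw [h2 X]; try norm_num] at h1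
      have : expQ n p (fun _ => (0:ℝ)) = 0 := by simp [expQ]
      rw [this] at h1
      linarith
    · rw [advOf]
      have h1 : expQ n p (fun X => (∑ g ∈ Fch n p D, a g * g X) ^ 2) = Sig :=
        expQ_sq_of_ortho n p _ (ortho_Fch hp D) a
      have h2 : expP n p H (fun X => ∑ g ∈ Fch n p D, a g * g X) = Sig := by
        rw [expP_lin n p H _ a (fun g => g), hSig]
        exact Finset.sum_congr rfl fun g _ => by rw [sq]
      rw [h1, h2, Real.div_sqrt]
  · -- upper bound
    rintro r ⟨f, hdeg, _, rfl⟩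
    unfold IsDegreeLE at hdeg
    rw [degree_span] at hdeg
    obtain ⟨c, -, hrep⟩ := Submodule.mem_span_finset.mp hdeg
    have hfX : f = fun X => ∑ g ∈ Fch n p D, c g * g X := by
      rw [← hrep]; funext X; rw [Finset.sum_apply]; rfl
    have hEQ : expQ n p (fun X => f X ^ 2) = ∑ g ∈ Fch n p D, (c g) ^ 2 := by
      rw [hfX]; exact expQ_sq_of_ortho n p _ (ortho_Fch hp D) c
    have hEP : expP n p H f = ∑ g ∈ Fch n p D, c g * a g := by
      rw [hfX, expP_lin n p H _ c (fun g => g)]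
    rw [advOf, hEQ, hEP]
    set u : ℝ := ∑ g ∈ Fch n p D, (c g) ^ 2 with hu
    set v : ℝ := ∑ g ∈ Fch n p D, c g * a g with hv
    have hu0 : 0 ≤ u := Finset.sum_nonneg fun g _ => sq_nonneg _
    have hCS : v ^ 2 ≤ u * Sig := Finset.sum_mul_sq_le_sq_mul_sq _ c a
    by_cases huz : u = 0
    · have hv0 : v = 0 := by nlinarith [sq_nonneg v]
      rw [hv0, zero_div]
      exact Real.sqrt_nonneg _
    · have hupos : 0 < u := lt_of_le_of_ne hu0 (Ne.symm huz)
      rw [div_le_iff₀ (Real.sqrt_pos.mpr hupos)]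
      calc v ≤ |v| := le_abs_self v
      _ = Real.sqrt (v ^ 2) := (Real.sqrt_sq_eq_abs v).symm
      _ ≤ Real.sqrt (u * Sig) := Real.sqrt_le_sqrt hCS
      _ = Real.sqrt u * Real.sqrt Sig := Real.sqrt_mul hu0 Sig
      _ = Real.sqrt Sig * Real.sqrt u := mul_comm _ _

end AdvProof
namespace AdvProof
open Planted Finset

def PlantsAll {V : Type} (n : ℕ) (H : SimpleGraph V) (φ : V ↪ Fin n)
    (S : Finset (Edge n)) : Prop :=
  ∀ e ∈ S, ∃ u v, H.Adj u v ∧ (e : Sym2 (Fin n)) = s(φ u, φ v)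

lemma mem_edgeVerts_iff {n : ℕ} {S : Finset (Edge n)} {a : Fin n} :
    a ∈ edgeVerts n S ↔ ∃ e ∈ S, a ∈ (e : Sym2 (Fin n)) := by
  classical
  simp [edgeVerts]

lemma card_extensions {V : Type} [Fintype V] {n : ℕ} (S : Finset (Edge n))
    (γ : {v : Fin n // v ∈ edgeVerts n S} ↪ V) :
    Nat.card {φ : V ↪ Fin n // ∀ v, φ (γ v) = v.1}
      = (n - (edgeVerts n S).card).descFactorial
          (Fintype.card V - (edgeVerts n S).card) := by
  classical
  let fwd : {φ : V ↪ Fin n // ∀ v, φ (γ v) = v.1} →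
      ({x : V // x ∉ Set.range ⇑γ} ↪ {y : Fin n // y ∉ edgeVerts n S}) := fun φ =>
    ⟨fun x => ⟨φ.1 x.1, fun hmem =>
        x.2 (Set.mem_range.mpr ⟨⟨φ.1 x.1, hmem⟩, φ.1.injective (φ.2 ⟨φ.1 x.1, hmem⟩)⟩)⟩,
     fun x1 x2 h => Subtype.ext (φ.1.injective (congrArg Subtype.val h))⟩
  let bk0 : ({x : V // x ∉ Set.range ⇑γ} ↪ {y : Fin n // y ∉ edgeVerts n S}) → V → Fin n :=
    fun ψ x => if h : ∃ v, γ v = x then (Classical.choose h).1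
      else (ψ ⟨x, fun hr => h (Set.mem_range.mp hr)⟩).1
  have hbk_range : ∀ ψ v, bk0 ψ (γ v) = v.1 := by
    intro ψ v
    have h : ∃ w, γ w = γ v := ⟨v, rfl⟩
    simp only [bk0, dif_pos h]
    exact congrArg Subtype.val (γ.injective (Classical.choose_spec h))
  have hbk_not : ∀ ψ x (hx : ¬∃ v, γ v = x),
      bk0 ψ x = (ψ ⟨x, fun hr => hx (Set.mem_range.mp hr)⟩).1 := by
    intro ψ x hx
    simp only [bk0, dif_neg hx]
  have hbk_inj : ∀ ψ, Function.Injective (bk0 ψ) := by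
    intro ψ x1 x2 heq
    by_cases h1 : ∃ v, γ v = x1 <;> by_cases h2 : ∃ v, γ v = x2
    · rw [show bk0 ψ x1 = (Classical.choose h1).1 from dif_pos h1,
        show bk0 ψ x2 = (Classical.choose h2).1 from dif_pos h2] at heq
      rw [← Classical.choose_spec h1, ← Classical.choose_spec h2, Subtype.ext heq]
    · rw [show bk0 ψ x1 = (Classical.choose h1).1 from dif_pos h1, hbk_not ψ x2 h2] at heq
      exact absurd (heq ▸ (Classical.choose h1).2) (ψ _).2
    · rw [show bk0 ψ x2 = (Classical.choose h2).1 from dif_pos h2, hbk_not ψ x1 h1] at heq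
      exact absurd (heq ▸ (Classical.choose h2).2) (ψ _).2
    · rw [hbk_not ψ x1 h1, hbk_not ψ x2 h2] at heq
      have := ψ.injective (Subtype.ext heq)
      exact congrArg Subtype.val this
  have equiv : {φ : V ↪ Fin n // ∀ v, φ (γ v) = v.1} ≃
      ({x : V // x ∉ Set.range ⇑γ} ↪ {y : Fin n // y ∉ edgeVerts n S}) := by
    refine ⟨fwd, fun ψ => ⟨⟨bk0 ψ, hbk_inj ψ⟩, fun v => hbk_range ψ v⟩, ?_, ?_⟩
    · intro φ
      apply Subtype.ext
      apply DFunLike.ext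
      intro x
      by_cases h : ∃ v, γ v = x
      · show bk0 _ x = φ.1 x
        rw [show bk0 _ x = (Classical.choose h).1 from dif_pos h]
        have h2 := φ.2 (Classical.choose h)
        rw [Classical.choose_spec h] at h2
        exact h2.symm
      · show bk0 _ x = φ.1 x
        rw [hbk_not _ x h]
        rfl
    · intro ψ
      apply DFunLike.ext
      intro x
      apply Subtype.ext
      show bk0 ψ x.1 = (ψ x).1
      have hx : ¬∃ v, γ v = x.1 := fun hex => x.2 (Set.mem_range.mpr hex)
      rw [hbk_not ψ x.1 hx]
  rw [Nat.card_congr equiv, Nat.card_eq_fintype_card, Fintype.card_embedding_eq]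
  congr 1
  · rw [Fintype.card_subtype_compl, Fintype.card_fin]
    congr 1
    simp
  · rw [Fintype.card_subtype_compl]
    congr 1
    rw [← Fintype.card_coe (edgeVerts n S)]
    exact (Fintype.card_congr (Equiv.ofInjective ⇑γ γ.injective)).symm

end AdvProof
namespace AdvProof
open Planted Finset

set_option maxHeartbeats 1000000 in
lemma count_plants {V : Type} [Fintype V] (n : ℕ) (H : SimpleGraph V)
    (S : Finset (Edge n)) :
    Nat.card {φ : V ↪ Fin n // PlantsAll n H φ S}
      = finCopyCount n S H * (n - (edgeVerts n S).card).descFactorial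
          (Fintype.card V - (edgeVerts n S).card) := by
  classical
  have hex : ∀ (φ : {φ : V ↪ Fin n // PlantsAll n H φ S})
      (v : {v : Fin n // v ∈ edgeVerts n S}), ∃ u : V, φ.1 u = v.1 := by
    intro φ v
    obtain ⟨e, he, hv⟩ := mem_edgeVerts_iff.mp v.2
    obtain ⟨u, w, _, hew⟩ := φ.2 e he
    rw [hew] at hv
    rcases Sym2.mem_iff.mp hv with h | h
    · exact ⟨u, h.symm⟩
    · exact ⟨w, h.symm⟩
  let F0 : {φ : V ↪ Fin n // PlantsAll n H φ S} →
      {v : Fin n // v ∈ edgeVerts n S} → V := fun φ v => Classical.choose (hex φ v)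
  have hF0 : ∀ (φ : {φ : V ↪ Fin n // PlantsAll n H φ S})
      (v : {v : Fin n // v ∈ edgeVerts n S}), φ.1 (F0 φ v) = v.1 :=
    fun φ v => Classical.choose_spec (hex φ v)
  have hF0inj : ∀ φ, Function.Injective (F0 φ) := by
    intro φ v1 v2 h
    apply Subtype.ext
    rw [← hF0 φ v1, ← hF0 φ v2, h]
  have hF0adj : ∀ φ u v, (finsetGraph n S).Adj u v → H.Adj (F0 φ u) (F0 φ v) := by
    rintro φ u v ⟨e, he, hev⟩
    obtain ⟨a, b, hab, heab⟩ := φ.2 e he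
    rw [heab] at hev
    rcases Sym2.eq_iff.mp hev with ⟨h1, h2⟩ | ⟨h1, h2⟩
    · have hu : F0 φ u = a := φ.1.injective (by rw [hF0 φ u, ← h1])
      have hv : F0 φ v = b := φ.1.injective (by rw [hF0 φ v, ← h2])
      rw [hu, hv]; exact hab
    · have hu : F0 φ u = b := φ.1.injective (by rw [hF0 φ u, ← h2])
      have hv : F0 φ v = a := φ.1.injective (by rw [hF0 φ v, ← h1])
      rw [hu, hv]; exact hab.symm
  let F : {φ : V ↪ Fin n // PlantsAll n H φ S} →
      {γ : {v : Fin n // v ∈ edgeVerts n S} ↪ V //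
        ∀ u v, (finsetGraph n S).Adj u v → H.Adj (γ u) (γ v)} :=
    fun φ => ⟨⟨F0 φ, hF0inj φ⟩, fun u v h => hF0adj φ u v h⟩
  have hcards : Nat.card {φ : V ↪ Fin n // PlantsAll n H φ S}
      = ∑ γ : {γ : {v : Fin n // v ∈ edgeVerts n S} ↪ V //
          ∀ u v, (finsetGraph n S).Adj u v → H.Adj (γ u) (γ v)},
          Nat.card {φ : {φ : V ↪ Fin n // PlantsAll n H φ S} // F φ = γ} := by
    simp only [Nat.card_eq_fintype_card]
    rw [Fintype.card_congr (Equiv.sigmaFiberEquiv F).symm, Fintype.card_sigma]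
  rw [hcards]
  have hfiber : ∀ γ : {γ : {v : Fin n // v ∈ edgeVerts n S} ↪ V //
      ∀ u v, (finsetGraph n S).Adj u v → H.Adj (γ u) (γ v)},
      Nat.card {φ : {φ : V ↪ Fin n // PlantsAll n H φ S} // F φ = γ}
      = (n - (edgeVerts n S).card).descFactorial
          (Fintype.card V - (edgeVerts n S).card) := by
    intro γ
    rw [← card_extensions S γ.1]
    have hpa : ∀ ψ : {φ : V ↪ Fin n // ∀ v, φ (γ.1 v) = v.1}, PlantsAll n H ψ.1 S := by
      intro ψ e he
      obtain ⟨a, b, hab⟩ : ∃ a b, (e : Sym2 (Fin n)) = s(a, b) :=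
        Sym2.inductionOn (f := fun z => ∃ a b, z = s(a, b)) (e : Sym2 (Fin n))
          fun x y => ⟨x, y, rfl⟩
      have ha : a ∈ edgeVerts n S := mem_edgeVerts_iff.mpr
        ⟨e, he, by rw [hab]; exact Sym2.mem_mk_left a b⟩
      have hb : b ∈ edgeVerts n S := mem_edgeVerts_iff.mpr
        ⟨e, he, by rw [hab]; exact Sym2.mem_mk_right a b⟩
      have hadj : (finsetGraph n S).Adj ⟨a, ha⟩ ⟨b, hb⟩ := ⟨e, he, hab⟩
      refine ⟨γ.1 ⟨a, ha⟩, γ.1 ⟨b, hb⟩, γ.2 _ _ hadj, ?_⟩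
      rw [hab, ψ.2 ⟨a, ha⟩, ψ.2 ⟨b, hb⟩]
    have hFγ : ∀ ψ : {φ : V ↪ Fin n // ∀ v, φ (γ.1 v) = v.1}, F ⟨ψ.1, hpa ψ⟩ = γ := by
      intro ψ
      apply Subtype.ext
      apply DFunLike.ext
      intro v
      apply ψ.1.injective
      exact (hF0 ⟨ψ.1, hpa ψ⟩ v).trans (ψ.2 v).symm
    refine Nat.card_congr ⟨fun t => ⟨t.1.1, fun v => ?_⟩, fun ψ => ⟨⟨ψ.1, hpa ψ⟩, hFγ ψ⟩, ?_, ?_⟩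
    · have hγv : F0 t.1 v = γ.1 v := congrArg (fun g => g.1 v) t.2
      exact hγv ▸ hF0 t.1 v
    · intro t
      exact Subtype.ext (Subtype.ext rfl)
    · intro ψ
      exact Subtype.ext rfl
  simp only [hfiber]
  rw [Finset.sum_const, Finset.card_univ, smul_eq_mul]
  congr 1
  rw [finCopyCount, copyCount, Nat.card_eq_fintype_card]

end AdvProof
namespace AdvProof
open Planted Finset

open Classical in
lemma inner_sum_chi {V : Type} [Fintype V] {n : ℕ} {p : ℝ} (hp : p ∈ Set.Ioo (0:ℝ) 1)
    (H : SimpleGraph V) (φ : V ↪ Fin n) (S : Finset (Edge n)) :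
    ∑ X : EdgeFun n, nullWeight n p X * chi n p S (plant n H φ X)
      = if PlantsAll n H φ S then ((1 - p) / Real.sqrt (p * (1 - p))) ^ S.card else 0 := by
  classical
  have hp0 := hp.1
  have hp1 := hp.2
  have hpp : (0:ℝ) < p * (1 - p) := by nlinarith
  set s : ℝ := Real.sqrt (p * (1 - p)) with hs
  have hs0 : s ≠ 0 := by positivity
  have key : ∀ X : EdgeFun n, chi n p S (plant n H φ X)
      = ∏ e ∈ S, (if (∃ u v, H.Adj u v ∧ (e : Sym2 (Fin n)) = s(φ u, φ v)) then (1 - p) / s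
          else ((if X e then (1:ℝ) else 0) - p) / s) := by
    intro X
    unfold chi
    refine Finset.prod_congr rfl fun e _ => ?_
    by_cases hpl : ∃ u v, H.Adj u v ∧ (e : Sym2 (Fin n)) = s(φ u, φ v)
    · have hplant : plant n H φ X e = true := by simp [plant, hpl]
      rw [hplant, if_pos hpl]
      norm_num
      rw [hs]
    · have hplant : plant n H φ X e = X e := by simp [plant, hpl]
      rw [hplant, if_neg hpl]
  simp only [key]
  rw [sum_nullWeight_prod n p S
    (fun e b => if (∃ u v, H.Adj u v ∧ (e : Sym2 (Fin n)) = s(φ u, φ v)) then (1 - p) / s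
      else ((if b then (1:ℝ) else 0) - p) / s)]
  simp only [eq_self_iff_true, if_true, Bool.false_eq_true, if_false]
  have factor : ∀ e : Edge n,
      (p * (if (∃ u v, H.Adj u v ∧ (e : Sym2 (Fin n)) = s(φ u, φ v)) then (1 - p) / s
          else ((1:ℝ) - p) / s)
        + (1 - p) * (if (∃ u v, H.Adj u v ∧ (e : Sym2 (Fin n)) = s(φ u, φ v)) then (1 - p) / s
          else ((0:ℝ) - p) / s))
      = if (∃ u v, H.Adj u v ∧ (e : Sym2 (Fin n)) = s(φ u, φ v)) then (1 - p) / s else 0 := by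
    intro e
    by_cases hpl : ∃ u v, H.Adj u v ∧ (e : Sym2 (Fin n)) = s(φ u, φ v)
    · rw [if_pos hpl, if_pos hpl, if_pos hpl]
      ring
    · rw [if_neg hpl, if_neg hpl, if_neg hpl]
      field_simp
      ring
  simp only [factor]
  by_cases hall : PlantsAll n H φ S
  · rw [if_pos hall]
    rw [Finset.prod_congr rfl (fun e he => if_pos (hall e he)), Finset.prod_const]
  · rw [if_neg hall]
    unfold PlantsAll at hall
    obtain ⟨e, hne⟩ := not_forall.mp hall
    rw [Classical.not_imp] at hne
    exact Finset.prod_eq_zero hne.1 (if_neg hne.2)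

lemma expP_chi {V : Type} [Fintype V] {n : ℕ} {p : ℝ} (hp : p ∈ Set.Ioo (0:ℝ) 1)
    (H : SimpleGraph V) (S : Finset (Edge n)) :
    expP n p H (chi n p S)
      = (Fintype.card (V ↪ Fin n) : ℝ)⁻¹
        * (Nat.card {φ : V ↪ Fin n // PlantsAll n H φ S} : ℝ)
        * ((1 - p) / Real.sqrt (p * (1 - p))) ^ S.card := by
  classical
  unfold expP
  rw [Finset.sum_congr rfl (fun φ _ => inner_sum_chi hp H φ S)]
  rw [Finset.sum_ite, Finset.sum_const, Finset.sum_const_zero, add_zero, nsmul_eq_mul]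
  have hcount : ((Finset.univ.filter fun φ : V ↪ Fin n => PlantsAll n H φ S).card : ℝ)
      = (Nat.card {φ : V ↪ Fin n // PlantsAll n H φ S} : ℝ) := by
    rw [Nat.card_eq_fintype_card, Fintype.card_subtype]
  rw [hcount, mul_assoc]

lemma expP_chi_sq {V : Type} [Fintype V] {n : ℕ} {p : ℝ} (hp : p ∈ Set.Ioo (0:ℝ) 1)
    (H : SimpleGraph V) (hcard : Fintype.card V ≤ n) (S : Finset (Edge n)) :
    (expP n p H (chi n p S)) ^ 2
      = ((finCopyCount n S H : ℝ) / (n.descFactorial (edgeVerts n S).card : ℝ)) ^ 2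
        * ((1 - p) / p) ^ S.card := by
  classical
  have hp0 := hp.1
  have hp1 := hp.2
  have hpp : (0:ℝ) < p * (1 - p) := by nlinarith
  rw [expP_chi hp H S, count_plants n H S, Fintype.card_embedding_eq, Fintype.card_fin]
  set k := (edgeVerts n S).card with hk
  set m := Fintype.card V with hm
  have hc2 : (((1 - p) / Real.sqrt (p * (1 - p))) ^ S.card) ^ 2 = ((1 - p) / p) ^ S.card := by
    rw [← pow_mul, mul_comm S.card 2, pow_mul]
    congr 1
    rw [div_pow, Real.sq_sqrt hpp.le]
    rw [div_eq_div_iff (by positivity) (by positivity)]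
    ring
  rw [mul_pow, hc2]
  congr 1
  by_cases hM : finCopyCount n S H = 0
  · rw [hM]
    norm_num
  · have hne : Nonempty {f : {v : Fin n // v ∈ edgeVerts n S} ↪ V //
        ∀ u v, (finsetGraph n S).Adj u v → H.Adj (f u) (f v)} := by
      by_contra hc
      rw [not_nonempty_iff] at hc
      rw [finCopyCount, copyCount, Nat.card_of_isEmpty] at hM
      exact hM rfl
    obtain ⟨γ⟩ := hne
    have hkm : k ≤ m := by
      have h := Fintype.card_le_of_embedding γ.1
      rwa [Fintype.card_coe] at h
    have hkn : k ≤ n := hkm.trans hcard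
    have hdf : (n - k).descFactorial (m - k) * n.descFactorial k = n.descFactorial m :=
      Nat.descFactorial_mul_descFactorial hkm
    have h1 : (n.descFactorial m : ℝ) ≠ 0 := by
      rw [Nat.cast_ne_zero]
      intro h
      exact absurd (Nat.descFactorial_eq_zero_iff_lt.mp h) (by omega)
    have h2 : (n.descFactorial k : ℝ) ≠ 0 := by
      rw [Nat.cast_ne_zero]
      intro h
      exact absurd (Nat.descFactorial_eq_zero_iff_lt.mp h) (by omega)
    have h3 : ((n - k).descFactorial (m - k) : ℝ) ≠ 0 := by
      rw [Nat.cast_ne_zero]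
      intro h
      exact absurd (Nat.descFactorial_eq_zero_iff_lt.mp h) (by omega)
    have hdfR : ((n - k).descFactorial (m - k) : ℝ) * (n.descFactorial k : ℝ)
        = (n.descFactorial m : ℝ) := by exact_mod_cast congrArg Nat.cast hdf
    push_cast
    rw [← hdfR]
    field_simp

end AdvProof
open Planted in
/-- the formula for the squared degree-D advantage. -/
theorem adv_squared_formula
    {V : Type} [Fintype V] (n : ℕ) (p : ℝ) (hp : p ∈ Set.Ioo (0 : ℝ) 1) (D : ℕ)
    (H : SimpleGraph V) (hcard : Fintype.card V ≤ n) :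
    (Adv n p D H) ^ 2 =
      ∑ S ∈ Finset.univ.filter (fun S : Finset (Edge n) => S.card ≤ D),
        ((finCopyCount n S H : ℝ) / (n.descFactorial (edgeVerts n S).card : ℝ)) ^ 2 *
          ((1 - p) / p) ^ S.card := by
  classical
  rw [AdvProof.adv_eq n p hp D H hcard,
    Real.sq_sqrt (Finset.sum_nonneg fun g _ => sq_nonneg _)]
  unfold AdvProof.Fch
  rw [Finset.sum_image (fun S hS T hT h => AdvProof.chi_inj hp S T h)]
  exact Finset.sum_congr rfl fun S _ => AdvProof.expP_chi_sq hp H hcard S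
end

section
/- Fix an integer t ≥ 1. For each n ∈ ℕ, let k_n ∈ ℕ and let d^{(n)} : [k_n] → ℕ satisfy d^{(n)}_i ≤ k_n for all i. If (Σ_{i∈[k_n]} (d^{(n)}_i)^t) / k_n → ∞ as n → ∞, then (Σ_{i∈[k_n]} (d^{(n)}_i)_(t)) / (Σ_{i∈[k_n]} (d^{(n)}_i)^t) → 1 as n → ∞, where (d)_(t) = d(d−1)⋯(d−t+1) is the falling factorial (equal to 0 when d < t). In particular Σ_i (d^{(n)}_i)_(t) = (1−o(1)) Σ_i (d^{(n)}_i)^t. -/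
open Filter

lemma pow_le_descFactorial_add (t : ℕ) : ∀ d : ℕ,
    (d:ℝ)^t ≤ (d.descFactorial t : ℝ) + (t:ℝ)^2 * (d:ℝ)^(t-1) := by
  induction t with
  | zero => intro d; simp
  | succ t ih =>
    intro d
    rcases le_or_gt d t with hdt | hdt
    · have h0 : d.descFactorial (t+1) = 0 :=
        Nat.descFactorial_eq_zero_iff_lt.mpr (by omega)
      rw [h0]
      have h2 : (d:ℝ) ≤ (t:ℝ) := by exact_mod_cast hdt
      have h3 : (d:ℝ) * (d:ℝ)^t ≤ (t:ℝ) * (d:ℝ)^t :=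
        mul_le_mul_of_nonneg_right h2 (by positivity)
      push_cast
      have hp0 : (0:ℝ) ≤ (d:ℝ)^t := pow_nonneg (Nat.cast_nonneg d) t
      have ht0 : (0:ℝ) ≤ (t:ℝ) := Nat.cast_nonneg t
      nlinarith [hp0, h3, pow_succ (d:ℝ) t,
        mul_nonneg ht0 hp0, mul_nonneg (mul_nonneg ht0 ht0) hp0]
    · have hcast : (d.descFactorial (t+1) : ℝ) = ((d:ℝ) - t) * (d.descFactorial t : ℝ) := by
        rw [Nat.descFactorial_succ]
        push_cast [Nat.cast_sub hdt.le]
        ring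
      have hdesc_le : (d.descFactorial t : ℝ) ≤ (d:ℝ)^t := by
        exact_mod_cast Nat.descFactorial_le_pow d t
      have hih := ih d
      have hdpow : (d:ℝ) * (d:ℝ)^(t-1) ≤ (d:ℝ)^t ∨ t = 0 := by
        rcases Nat.eq_zero_or_pos t with h0 | h0
        · right; exact h0
        · left
          have he : (d:ℝ) * (d:ℝ)^(t-1) = (d:ℝ)^(t-1+1) := (pow_succ' _ _).symm
          rw [he, show t-1+1 = t by omega]
      have hdt' : (t:ℝ) < (d:ℝ) := by exact_mod_cast hdt
      have hdpos : (0:ℝ) ≤ (d:ℝ) := Nat.cast_nonneg d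
      rw [hcast]
      push_cast
      rcases hdpow with hp | h0
      · have e1 : (d:ℝ)^(t+1) = (d:ℝ) * (d:ℝ)^t := by ring
        have e2 := mul_le_mul_of_nonneg_left hih hdpos
        have e3 := mul_le_mul_of_nonneg_left hp (sq_nonneg (t:ℝ))
        have e4 : (0:ℝ) ≤ (d.descFactorial t : ℝ) := Nat.cast_nonneg _
        have e5 : (0:ℝ) ≤ (t:ℝ) := Nat.cast_nonneg _
        nlinarith [pow_nonneg hdpos t, hdesc_le]
      · subst h0
        simp

lemma pow_pred_le_div_add (t : ℕ) (ht : 1 ≤ t) (d : ℕ) (T : ℝ) (hT : 0 < T) :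
    (d:ℝ)^(t-1) ≤ (d:ℝ)^t / T + T^(t-1) := by
  have hdpos : (0:ℝ) ≤ (d:ℝ) := Nat.cast_nonneg d
  have hpow : (d:ℝ)^t = (d:ℝ)^(t-1) * (d:ℝ) := by
    rw [← pow_succ, show t-1+1 = t by omega]
  rcases le_or_gt T (d:ℝ) with hc | hc
  · have h1 : (d:ℝ)^(t-1) * T ≤ (d:ℝ)^t := by
      rw [hpow]; exact mul_le_mul_of_nonneg_left hc (by positivity)
    have h2 : (d:ℝ)^(t-1) ≤ (d:ℝ)^t / T := by
      rw [le_div_iff₀ hT]; exact h1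
    have h3 : (0:ℝ) ≤ T^(t-1) := by positivity
    linarith
  · have h1 : (d:ℝ)^(t-1) ≤ T^(t-1) := pow_le_pow_left₀ hdpos hc.le _
    have h2 : (0:ℝ) ≤ (d:ℝ)^t / T := by positivity
    linarith

/-- sums of falling factorials of bounded degree sequences are asymptotically
equal to the corresponding power sums, provided the power sum is `ω(k)`. -/
theorem sum_descFactorial_asymptotic
    (t : ℕ) (ht : 1 ≤ t)
    (k : ℕ → ℕ) (d : (n : ℕ) → Fin (k n) → ℕ)
    (hd : ∀ n i, d n i ≤ k n)
    (h : Tendsto (fun n => (∑ i, (d n i : ℝ) ^ t) / (k n : ℝ)) atTop atTop) :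
    Tendsto
      (fun n => (∑ i, ((d n i).descFactorial t : ℝ)) / (∑ i, (d n i : ℝ) ^ t))
      atTop (nhds 1) := by
  rw [Metric.tendsto_nhds]
  intro ε hε
  set c : ℝ := (t:ℝ)^2 + 1 with hc
  have hc0 : (0:ℝ) < c := by positivity
  have hε2 : (0:ℝ) < ε/2 := by linarith
  set T : ℝ := 4 * c / ε with hTdef
  have hT : 0 < T := by positivity
  have hTp : (0:ℝ) < T^(t-1) := by positivity
  set C' : ℝ := 4 * c * T^(t-1) / ε with hC'def
  have hC'0 : 0 < C' := by positivity
  set C : ℝ := C' + 1 with hCdef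
  have hC : 0 < C := by positivity
  clear_value c T C' C
  filter_upwards [h.eventually_ge_atTop C] with n hn
  set S : ℝ := ∑ i, (d n i : ℝ)^t with hS
  set F : ℝ := ∑ i, ((d n i).descFactorial t : ℝ) with hF
  have hS0' : (0:ℝ) ≤ S := Finset.sum_nonneg fun i _ => by positivity
  have hk : 1 ≤ k n := by
    by_contra hk0
    have hkz : k n = 0 := by omega
    rw [hkz] at hn
    simp only [Nat.cast_zero, div_zero] at hn
    linarith
  have hK1 : (1:ℝ) ≤ (k n : ℝ) := by exact_mod_cast hk
  have hSK : C * (k n : ℝ) ≤ S := by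
    rw [le_div_iff₀ (by linarith : (0:ℝ) < (k n : ℝ))] at hn
    exact hn
  have hS0 : 0 < S := lt_of_lt_of_le (mul_pos hC (by linarith)) hSK
  have hFS : F ≤ S := Finset.sum_le_sum fun i _ => by
    exact_mod_cast Nat.descFactorial_le_pow (d n i) t
  have hF0 : (0:ℝ) ≤ F := Finset.sum_nonneg fun i _ => Nat.cast_nonneg _
  -- S ≤ F + c * Σ d^{t-1}
  have h1 : S ≤ F + c * ∑ i, (d n i : ℝ)^(t-1) := by
    have hsum : S ≤ ∑ i, ((((d n i).descFactorial t : ℝ)) + (t:ℝ)^2 * (d n i : ℝ)^(t-1)) :=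
      Finset.sum_le_sum fun i _ => pow_le_descFactorial_add t (d n i)
    rw [Finset.sum_add_distrib, ← Finset.mul_sum] at hsum
    have hnn : (0:ℝ) ≤ ∑ i, (d n i : ℝ)^(t-1) :=
      Finset.sum_nonneg fun i _ => by positivity
    nlinarith [hsum]
  -- Σ d^{t-1} ≤ S/T + k * T^{t-1}
  have h2 : ∑ i, (d n i : ℝ)^(t-1) ≤ S / T + (k n : ℝ) * T^(t-1) := by
    have hsum : ∑ i, (d n i : ℝ)^(t-1) ≤ ∑ i, ((d n i : ℝ)^t / T + T^(t-1)) :=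
      Finset.sum_le_sum fun i _ => pow_pred_le_div_add t ht (d n i) T hT
    rw [Finset.sum_add_distrib, ← Finset.sum_div, Finset.sum_const,
      Finset.card_univ, Fintype.card_fin, nsmul_eq_mul] at hsum
    exact hsum
  -- k ≤ S / C'
  have hk2 : (k n : ℝ) ≤ S / C' := by
    rw [le_div_iff₀ hC'0]
    have e := mul_le_mul_of_nonneg_right (show C' ≤ C by linarith)
      (by linarith : (0:ℝ) ≤ (k n : ℝ))
    nlinarith [hSK, e]
  have key1 : c * (S / T) = ε / 4 * S := by
    rw [hTdef]; field_simp
  have key2 : c * (S / C' * T^(t-1)) = ε / 4 * S := by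
    rw [hC'def, hTdef]; field_simp
  have h4 : (k n : ℝ) * T^(t-1) ≤ S / C' * T^(t-1) :=
    mul_le_mul_of_nonneg_right hk2 hTp.le
  have hfinal : S - F ≤ ε / 2 * S := by
    have e1 := mul_le_mul_of_nonneg_left h2 hc0.le
    have e2 := mul_le_mul_of_nonneg_left h4 hc0.le
    linarith [e1, e2, key1, key2, h1]
  -- conclude
  have hq1 : F / S ≤ 1 := by
    rw [div_le_one hS0]; exact hFS
  have hq2 : 1 - F / S ≤ ε / 2 := by
    have e : 1 - F / S = (S - F) / S := by field_simp
    rw [e, div_le_iff₀ hS0]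
    linarith [hfinal]
  have : dist (F / S) 1 ≤ ε / 2 := by
    rw [Real.dist_eq, abs_of_nonpos (by linarith)]
    linarith
  linarith
end

section
/- Let a, b be nonnegative integers with a ≥ b. Then the falling factorial satisfies (a)_(b) = a!/(a−b)! ≥ a^b · exp( − b² / (2(a−b+1)) ). -/
/-- lower bound on the falling factorial. -/
theorem descFactorial_ge_pow_mul_exp
    (a b : ℕ) (h : b ≤ a) :
    a.descFactorial b = a.factorial / (a - b).factorial ∧
    (a : ℝ) ^ b * Real.exp (-(b : ℝ) ^ 2 / (2 * ((a : ℝ) - (b : ℝ) + 1))) ≤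
      (a.descFactorial b : ℝ) := by
  constructor
  · rw [Nat.descFactorial_eq_div h]
  rcases Nat.eq_zero_or_pos b with rfl | hb
  · simp
  have hbr : (b:ℝ) ≤ (a:ℝ) := by exact_mod_cast h
  have hden : (0:ℝ) < (a:ℝ) - b + 1 := by linarith
  -- key per-term bound
  have key : ∀ i ∈ Finset.range b,
      (a:ℝ) * Real.exp (-((i:ℝ)/((a:ℝ)-i))) ≤ (a:ℝ) - i := by
    intro i hi
    have hib : i < b := Finset.mem_range.mp hi
    have h1 : (i:ℝ) < (a:ℝ) := by exact_mod_cast lt_of_lt_of_le hib h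
    have hd : (0:ℝ) < (a:ℝ) - i := by linarith
    have hexp := Real.add_one_le_exp ((i:ℝ)/((a:ℝ)-i))
    have h3 : ((a:ℝ)-i) * ((i:ℝ)/((a:ℝ)-i) + 1) = a := by field_simp; ring
    have h2 : (a:ℝ) ≤ ((a:ℝ)-i) * Real.exp ((i:ℝ)/((a:ℝ)-i)) := by nlinarith
    rw [Real.exp_neg]
    rw [mul_inv_le_iff₀ (Real.exp_pos _)]
    nlinarith
  have hsumq : ∀ n : ℕ, (∑ i ∈ Finset.range n, (i:ℝ)) ≤ (n:ℝ)^2/2 := by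
    intro n; induction n with
    | zero => simp
    | succ k ih => rw [Finset.sum_range_succ]; push_cast; nlinarith
  have hS : ∑ i ∈ Finset.range b, (i:ℝ)/((a:ℝ)-i) ≤ (b:ℝ)^2/(2*((a:ℝ)-b+1)) := by
    calc ∑ i ∈ Finset.range b, (i:ℝ)/((a:ℝ)-i)
        ≤ ∑ i ∈ Finset.range b, (i:ℝ)/((a:ℝ)-b+1) := by
          refine Finset.sum_le_sum (fun i hi => ?_)
          have hib : i < b := Finset.mem_range.mp hi
          have h1 : (i:ℝ) + 1 ≤ (b:ℝ) := by exact_mod_cast hib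
          gcongr
          linarith
      _ = (∑ i ∈ Finset.range b, (i:ℝ))/((a:ℝ)-b+1) := by rw [← Finset.sum_div]
      _ ≤ ((b:ℝ)^2/2)/((a:ℝ)-b+1) := by gcongr; exact hsumq b
      _ = (b:ℝ)^2/(2*((a:ℝ)-b+1)) := by rw [div_div]
  rw [Nat.descFactorial_eq_prod_range, Nat.cast_prod]
  have hcast : ∀ i ∈ Finset.range b, ((a - i : ℕ):ℝ) = (a:ℝ) - i := by
    intro i hi
    have : i ≤ a := le_of_lt (lt_of_lt_of_le (Finset.mem_range.mp hi) h)
    push_cast [this]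
    ring
  rw [Finset.prod_congr rfl hcast]
  calc (a:ℝ)^b * Real.exp (-(b:ℝ)^2/(2*((a:ℝ)-b+1)))
      ≤ (a:ℝ)^b * Real.exp (-∑ i ∈ Finset.range b, (i:ℝ)/((a:ℝ)-i)) := by
        gcongr
        rw [neg_div]; linarith
    _ = ∏ i ∈ Finset.range b, ((a:ℝ) * Real.exp (-((i:ℝ)/((a:ℝ)-i)))) := by
        rw [Finset.prod_mul_distrib, Finset.prod_const, Finset.card_range,
          ← Real.exp_sum, ← Finset.sum_neg_distrib]
    _ ≤ ∏ i ∈ Finset.range b, ((a:ℝ) - i) :=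
        Finset.prod_le_prod (fun i hi => by positivity) key
end

section
/- Let d and t be natural numbers with t ≥ 1. Then the falling factorial satisfies (d)_(t) ≥ d^t − t^t − t²·d^{t−1}, as an inequality of integers (equivalently of real numbers), where (d)_(t) = d(d−1)⋯(d−t+1), with (d)_(t) = 0 when d < t. -/
lemma pow_sub_pow_le_aux (a b : ℤ) (n : ℕ) (hb : 0 ≤ b) (hba : b ≤ a) :
    a ^ n - b ^ n ≤ (a - b) * (n * a ^ (n - 1)) := by
  have ha : 0 ≤ a := hb.trans hba
  rw [← geom_sum₂_mul a b n, mul_comm]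
  apply mul_le_mul_of_nonneg_left _ (by linarith)
  calc ∑ i ∈ Finset.range n, a ^ i * b ^ (n - 1 - i)
      ≤ ∑ i ∈ Finset.range n, a ^ (n - 1) := by
        apply Finset.sum_le_sum
        intro i hi
        calc a ^ i * b ^ (n - 1 - i) ≤ a ^ i * a ^ (n - 1 - i) := by
              apply mul_le_mul_of_nonneg_left (pow_le_pow_left₀ hb hba _) (pow_nonneg ha _)
          _ = a ^ (i + (n - 1 - i)) := (pow_add a i _).symm
          _ = a ^ (n - 1) := by
              congr 1
              have := Finset.mem_range.mp hi
              omega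
    _ = n * a ^ (n - 1) := by simp [Finset.sum_const, nsmul_eq_mul]

/-- integer lower bound on the falling factorial. -/
theorem descFactorial_ge_pow_sub
    (d t : ℕ) (ht : 1 ≤ t) :
    (d : ℤ) ^ t - (t : ℤ) ^ t - (t : ℤ) ^ 2 * (d : ℤ) ^ (t - 1) ≤
      (d.descFactorial t : ℤ) := by
  rcases lt_or_ge d t with h | h
  · rw [Nat.descFactorial_eq_zero_iff_lt.mpr h]
    have h1 : (d : ℤ) ^ t ≤ (t : ℤ) ^ t :=
      pow_le_pow_left₀ (by positivity) (by exact_mod_cast h.le) t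
    have h2 : (0 : ℤ) ≤ (t : ℤ) ^ 2 * (d : ℤ) ^ (t - 1) := by positivity
    linarith
  · have key : (d : ℤ) ^ t - ((d : ℤ) - t) ^ t ≤ (t : ℤ) ^ 2 * (d : ℤ) ^ (t - 1) := by
      have := pow_sub_pow_le_aux (d : ℤ) ((d : ℤ) - t) t
        (by have ht' : (t : ℤ) ≤ d := by exact_mod_cast h
            linarith)
        (by have ht' : (0 : ℤ) ≤ t := by positivity
            linarith)
      simp only [sub_sub_cancel] at this
      calc (d : ℤ) ^ t - ((d : ℤ) - t) ^ t ≤ (t : ℤ) * ((t : ℤ) * (d:ℤ) ^ (t-1)) := this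
        _ = (t : ℤ) ^ 2 * (d : ℤ) ^ (t - 1) := by ring
    have hdf : ((d : ℤ) - t) ^ t ≤ ((d + 1 - t : ℕ) : ℤ) ^ t := by
      apply pow_le_pow_left₀
      · have : (t : ℤ) ≤ d := by exact_mod_cast h
        linarith
      · push_cast [Nat.cast_sub (by omega : t ≤ d + 1)]
        linarith
    have hdf2 : ((d + 1 - t : ℕ) : ℤ) ^ t ≤ (d.descFactorial t : ℤ) := by
      exact_mod_cast Nat.pow_sub_le_descFactorial d t
    have htt : (0 : ℤ) ≤ (t : ℤ) ^ t := by positivity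
    linarith
end
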